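/- arXiv:cond-mat/0102181 — 3 statements merged into one kernel-verified Lean document; each statement's English description precedes it below -/
import Mathlib

section
/- With the boundary convention ΔH(0) := log₂|A|, so that Δ²H(1) := H(1) - log₂|A| and Δ²H(L) = H(L) - 2H(L-1) + H(L-2) for L ≥ 2, the series defining the total predictability G := Σ_{L=1}^∞ Δ²H(L) converges and its magnitude equals the redundancy: G = -(log₂|A| - h_μ), i.e. G = h_μ - log₂|A|. -/
set_option linter.unusedSectionVars false
set_option linter.unusedVariables false


open MeasureTheory Real Filter

/-- The probability of the cylinder set of sequences beginning with the word `w`. -/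
noncomputable def cylP {A : Type*} [MeasurableSpace A] (μ : Measure (ℕ → A)) {L : ℕ}
    (w : Fin L → A) : ℝ :=
  (μ {x : ℕ → A | ∀ i : Fin L, x i.1 = w i}).toReal

/-- The block entropy `H(L)` in bits, with the convention `0 · log₂ 0 = 0`;
terms with `cylP μ w = 0` contribute `0` to the sum. -/
noncomputable def blockH {A : Type*} [MeasurableSpace A] [Fintype A]
    (μ : Measure (ℕ → A)) (L : ℕ) : ℝ :=
  -∑ w : Fin L → A, cylP μ w * Real.logb 2 (cylP μ w)

/-- The left shift on one-sided sequences. -/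
def shift {A : Type*} : (ℕ → A) → (ℕ → A) := fun x n => x (n + 1)

/-- The second difference `Δ²H(L)` of the block entropy, with the boundary
convention `ΔH(0) := log₂|A|`, so that `Δ²H(1) = H(1) - log₂|A|` and
`Δ²H(L) = H(L) - 2H(L-1) + H(L-2)` for `L ≥ 2`. -/
noncomputable def d2H {A : Type*} [MeasurableSpace A] [Fintype A]
    (μ : Measure (ℕ → A)) : ℕ → ℝ := fun L =>
  if L = 1 then blockH μ 1 - Real.logb 2 (Fintype.card A)
  else blockH μ L - 2 * blockH μ (L - 1) + blockH μ (L - 2)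


noncomputable def natH {A : Type*} [MeasurableSpace A] [Fintype A]
    (μ : Measure (ℕ → A)) (L : ℕ) : ℝ :=
  -∑ w : Fin L → A, cylP μ w * Real.log (cylP μ w)

section aux
variable {A : Type*} [MeasurableSpace A] [MeasurableSingletonClass A] [Fintype A]

def cylSet {L : ℕ} (w : Fin L → A) : Set (ℕ → A) := {x : ℕ → A | ∀ i : Fin L, x i.1 = w i}

lemma measurableSet_cylSet {L : ℕ} (w : Fin L → A) : MeasurableSet (cylSet w) := by
  have : cylSet w = ⋂ i : Fin L, (fun x : ℕ → A => x i.1) ⁻¹' {w i} := by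
    ext x; simp [cylSet, Set.mem_iInter]
  rw [this]
  exact MeasurableSet.iInter fun i => (measurable_pi_apply i.1) (measurableSet_singleton _)

variable (μ : Measure (ℕ → A)) [IsProbabilityMeasure μ]

lemma cylP_def {L : ℕ} (w : Fin L → A) : cylP μ w = (μ (cylSet w)).toReal := rfl

lemma cylP_nonneg {L : ℕ} (w : Fin L → A) : 0 ≤ cylP μ w := ENNReal.toReal_nonneg

lemma cylSet_eq_iUnion_snoc {L : ℕ} (w : Fin L → A) :
    cylSet w = ⋃ a : A, cylSet (Fin.snoc w a) := by
  ext x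
  simp only [Set.mem_iUnion, cylSet, Set.mem_setOf_eq]
  constructor
  · intro hx
    refine ⟨x L, fun i => ?_⟩
    refine Fin.lastCases ?_ (fun j => ?_) i
    · simp
    · simpa using hx j
  · rintro ⟨a, ha⟩ i
    simpa using ha i.castSucc

lemma sum_cylP_snoc {L : ℕ} (w : Fin L → A) :
    ∑ a : A, cylP μ (Fin.snoc w a) = cylP μ w := by
  have hdisj : Pairwise (Function.onFun Disjoint fun a : A => cylSet (Fin.snoc w a)) := by
    intro a b hab
    refine Set.disjoint_left.2 fun x hxa hxb => hab ?_
    have h1 := hxa (Fin.last L)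
    have h2 := hxb (Fin.last L)
    simp only [Fin.snoc_last] at h1 h2
    rw [← h1, h2]
  have hm : μ (cylSet w) = ∑ a : A, μ (cylSet (Fin.snoc w a)) := by
    rw [cylSet_eq_iUnion_snoc, measure_iUnion hdisj fun a => measurableSet_cylSet _,
      tsum_fintype]
  simp only [cylP_def, hm]
  rw [ENNReal.toReal_sum]
  intro a _
  exact (measure_lt_top μ _).ne

lemma cylSet_cons_eq {L : ℕ} (w : Fin L → A) :
    shift ⁻¹' cylSet w = ⋃ a : A, cylSet (Fin.cons a w) := by
  ext x
  simp only [Set.mem_iUnion, cylSet, Set.mem_preimage, Set.mem_setOf_eq, shift]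
  constructor
  · intro hx
    refine ⟨x 0, fun i => ?_⟩
    refine Fin.cases ?_ (fun j => ?_) i
    · simp
    · simpa using hx j
  · rintro ⟨a, ha⟩ i
    simpa using ha i.succ

lemma sum_cylP_cons (hstat : MeasurePreserving (shift (A := A)) μ μ) {L : ℕ} (w : Fin L → A) :
    ∑ a : A, cylP μ (Fin.cons a w) = cylP μ w := by
  have hdisj : Pairwise (Function.onFun Disjoint fun a : A => cylSet (Fin.cons a w)) := by
    intro a b hab
    refine Set.disjoint_left.2 fun x hxa hxb => hab ?_
    have h1 := hxa (0 : Fin (L+1))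
    have h2 := hxb (0 : Fin (L+1))
    simp only [Fin.cons_zero] at h1 h2
    rw [← h1, h2]
  have hm : μ (cylSet w) = ∑ a : A, μ (cylSet (Fin.cons a w)) := by
    rw [← hstat.measure_preimage (measurableSet_cylSet w).nullMeasurableSet,
      cylSet_cons_eq, measure_iUnion hdisj fun a => measurableSet_cylSet _, tsum_fintype]
  simp only [cylP_def, hm]
  rw [ENNReal.toReal_sum]
  intro a _
  exact (measure_lt_top μ _).ne

lemma sum_group_snoc {M : Type*} [AddCommMonoid M] {L : ℕ} (F : (Fin (L+1) → A) → M) :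
    ∑ w : Fin (L+1) → A, F w = ∑ u : Fin L → A, ∑ c : A, F (Fin.snoc u c) := by
  rw [← (Fin.snocEquiv (fun _ => A)).sum_comp F, Fintype.sum_prod_type, Finset.sum_comm]
  exact Finset.sum_congr rfl fun u _ => Finset.sum_congr rfl fun c _ => rfl

lemma sum_group_cons {M : Type*} [AddCommMonoid M] {L : ℕ} (F : (Fin (L+1) → A) → M) :
    ∑ w : Fin (L+1) → A, F w = ∑ v : Fin L → A, ∑ a : A, F (Fin.cons a v) := by
  rw [← (Fin.consEquiv (fun _ => A)).sum_comp F, Fintype.sum_prod_type, Finset.sum_comm]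
  exact Finset.sum_congr rfl fun u _ => Finset.sum_congr rfl fun c _ => rfl

lemma sum_cylP (L : ℕ) : ∑ w : Fin L → A, cylP μ w = 1 := by
  induction L with
  | zero =>
    rw [Fintype.sum_eq_single (Fin.elim0 : Fin 0 → A) (fun w hw => absurd (funext fun i => i.elim0) hw)]
    have : cylSet (Fin.elim0 : Fin 0 → A) = Set.univ := by
      refine Set.eq_univ_iff_forall.2 fun x i => i.elim0
    rw [cylP_def, this, measure_univ, ENNReal.toReal_one]
  | succ L ih =>
    rw [sum_group_snoc]
    rw [Finset.sum_congr rfl fun u _ => sum_cylP_snoc μ u]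
    exact ih


lemma cylP_le_init {L : ℕ} (w : Fin (L+1) → A) : cylP μ w ≤ cylP μ (Fin.init w) := by
  have hsub : cylSet w ⊆ cylSet (Fin.init w) := fun x hx i => by
    simpa [Fin.init] using hx i.castSucc
  exact ENNReal.toReal_mono (measure_lt_top μ _).ne (measure_mono hsub)

lemma cylP_le_tail (hstat : MeasurePreserving (shift (A := A)) μ μ) {L : ℕ}
    (w : Fin (L+1) → A) : cylP μ w ≤ cylP μ (Fin.tail w) := by
  have hsub : cylSet w ⊆ shift ⁻¹' cylSet (Fin.tail w) := fun x hx i => by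
    simpa [Fin.tail, shift] using hx i.succ
  have : μ (cylSet w) ≤ μ (cylSet (Fin.tail w)) := by
    rw [← hstat.measure_preimage (measurableSet_cylSet (Fin.tail w)).nullMeasurableSet]
    exact measure_mono hsub
  exact ENNReal.toReal_mono (measure_lt_top μ _).ne this

lemma fin_init_cons {L : ℕ} (a : A) (v : Fin (L+1) → A) :
    Fin.init (Fin.cons a v : Fin (L+2) → A) = (Fin.cons a (Fin.init v) : Fin (L+1) → A) := by
  funext i
  refine Fin.cases ?_ (fun j => ?_) i
  · simp [Fin.init]
  · simp only [Fin.init, ← Fin.succ_castSucc, Fin.cons_succ]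

lemma sum_cylP_mul_init {L : ℕ} (g : (Fin L → A) → ℝ) :
    ∑ w : Fin (L+1) → A, cylP μ w * g (Fin.init w) = ∑ u : Fin L → A, cylP μ u * g u := by
  rw [sum_group_snoc]
  refine Finset.sum_congr rfl fun u _ => ?_
  simp only [Fin.init_snoc]
  rw [← Finset.sum_mul, sum_cylP_snoc]

lemma sum_cylP_mul_tail (hstat : MeasurePreserving (shift (A := A)) μ μ) {L : ℕ}
    (g : (Fin L → A) → ℝ) :
    ∑ w : Fin (L+1) → A, cylP μ w * g (Fin.tail w) = ∑ v : Fin L → A, cylP μ v * g v := by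
  rw [sum_group_cons]
  refine Finset.sum_congr rfl fun v _ => ?_
  simp only [Fin.tail_cons]
  rw [← Finset.sum_mul, sum_cylP_cons μ hstat]

lemma gibbs_term {p q : ℝ} (hp : 0 ≤ p) (hq : 0 ≤ q) (h : 0 < p → 0 < q) :
    p * Real.log q - p * Real.log p ≤ q - p := by
  rcases eq_or_lt_of_le hp with h0 | hp'
  · rw [← h0]; simpa using hq
  · have hq' := h hp'
    have h1 := Real.log_le_sub_one_of_pos (div_pos hq' hp')
    rw [Real.log_div hq'.ne' hp'.ne'] at h1
    have h2 := mul_le_mul_of_nonneg_left h1 hp'.le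
    calc p * Real.log q - p * Real.log p = p * (Real.log q - Real.log p) := by ring
      _ ≤ p * (q / p - 1) := h2
      _ = q - p := by field_simp


lemma blockH_eq_natH (L : ℕ) : blockH μ L = natH μ L / Real.log 2 := by
  simp only [blockH, natH, neg_div, Finset.sum_div, neg_inj]
  refine Finset.sum_congr rfl fun w _ => ?_
  rw [Real.logb]; ring

lemma cylP_elim0 : cylP μ (Fin.elim0 : Fin 0 → A) = 1 := by
  have : cylSet (Fin.elim0 : Fin 0 → A) = Set.univ :=
    Set.eq_univ_iff_forall.2 fun x i => i.elim0
  rw [cylP_def, this, measure_univ, ENNReal.toReal_one]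

lemma natH_zero : natH μ 0 = 0 := by
  rw [natH, Fintype.sum_eq_single (Fin.elim0 : Fin 0 → A)
    (fun w hw => absurd (funext fun i => i.elim0) hw), cylP_elim0]
  simp

lemma natH_ssa (hstat : MeasurePreserving (shift (A := A)) μ μ) (M : ℕ) :
    natH μ (M+2) + natH μ M ≤ 2 * natH μ (M+1) := by
  have key : ∀ w : Fin (M+2) → A,
      cylP μ w * Real.log (cylP μ (Fin.init w)) + cylP μ w * Real.log (cylP μ (Fin.tail w))
        - cylP μ w * Real.log (cylP μ (Fin.init (Fin.tail w))) - cylP μ w * Real.log (cylP μ w)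
      ≤ cylP μ (Fin.init w) * cylP μ (Fin.tail w) / cylP μ (Fin.init (Fin.tail w)) - cylP μ w := by
    intro w
    set p := cylP μ w with hpdef
    set f := cylP μ (Fin.init w) with hfdef
    set t := cylP μ (Fin.tail w) with htdef
    set m := cylP μ (Fin.init (Fin.tail w)) with hmdef
    have hp0 : 0 ≤ p := cylP_nonneg μ w
    have hf0 : 0 ≤ f := cylP_nonneg μ _
    have ht0 : 0 ≤ t := cylP_nonneg μ _
    have hm0 : 0 ≤ m := cylP_nonneg μ _
    rcases eq_or_lt_of_le hp0 with h0 | hp'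
    · rw [← h0]
      simp only [zero_mul, sub_zero, add_zero, zero_sub, neg_zero, zero_add]
      positivity
    · have hpf : p ≤ f := cylP_le_init μ w
      have hpt : p ≤ t := cylP_le_tail μ hstat w
      have htm : t ≤ m := cylP_le_init μ (Fin.tail w)
      have hf : 0 < f := lt_of_lt_of_le hp' hpf
      have ht : 0 < t := lt_of_lt_of_le hp' hpt
      have hm : 0 < m := lt_of_lt_of_le ht htm
      have hq : (0:ℝ) < f * t / m := by positivity
      have hg := gibbs_term hp0 hq.le (fun _ => hq)
      have hlog : Real.log (f * t / m) = Real.log f + Real.log t - Real.log m := by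
        rw [Real.log_div (by positivity) hm.ne', Real.log_mul hf.ne' ht.ne']
      rw [hlog] at hg
      linarith
  have hsum := Finset.sum_le_sum (fun w (_ : w ∈ (Finset.univ : Finset (Fin (M+2) → A))) => key w)
  have e1 : ∑ w : Fin (M+2) → A, cylP μ w * Real.log (cylP μ (Fin.init w))
      = ∑ u : Fin (M+1) → A, cylP μ u * Real.log (cylP μ u) :=
    by exact sum_cylP_mul_init μ (L := M+1) (fun u => Real.log (cylP μ u))
  have e2 : ∑ w : Fin (M+2) → A, cylP μ w * Real.log (cylP μ (Fin.tail w))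
      = ∑ u : Fin (M+1) → A, cylP μ u * Real.log (cylP μ u) :=
    by exact sum_cylP_mul_tail μ hstat (L := M+1) (fun u => Real.log (cylP μ u))
  have e3 : ∑ w : Fin (M+2) → A, cylP μ w * Real.log (cylP μ (Fin.init (Fin.tail w)))
      = ∑ u : Fin M → A, cylP μ u * Real.log (cylP μ u) := by
    have h1 : ∑ w : Fin (M+2) → A, cylP μ w * Real.log (cylP μ (Fin.init (Fin.tail w)))
        = ∑ v : Fin (M+1) → A, cylP μ v * Real.log (cylP μ (Fin.init v)) := by
      exact sum_cylP_mul_tail μ hstat (L := M+1) (fun v => Real.log (cylP μ (Fin.init v)))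
    rw [h1, sum_cylP_mul_init μ (L := M) (fun u => Real.log (cylP μ u))]
  have eQ : ∑ w : Fin (M+2) → A,
      cylP μ (Fin.init w) * cylP μ (Fin.tail w) / cylP μ (Fin.init (Fin.tail w)) ≤ 1 := by
    rw [sum_group_cons]
    have hv : ∀ v : Fin (M+1) → A,
        ∑ a : A, cylP μ (Fin.init (Fin.cons a v : Fin (M+2) → A))
            * cylP μ (Fin.tail (Fin.cons a v : Fin (M+2) → A))
          / cylP μ (Fin.init (Fin.tail (Fin.cons a v : Fin (M+2) → A))) ≤ cylP μ v := by
      intro v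
      simp only [Fin.tail_cons, fin_init_cons]
      have hst : ∑ a : A, cylP μ (Fin.cons a (Fin.init v)) * cylP μ v / cylP μ (Fin.init v)
          = cylP μ (Fin.init v) * cylP μ v / cylP μ (Fin.init v) := by
        rw [← Finset.sum_div, ← Finset.sum_mul, sum_cylP_cons μ hstat]
      rw [hst]
      rcases eq_or_ne (cylP μ (Fin.init v)) 0 with h | h
      · rw [h]; simpa using cylP_nonneg μ v
      · rw [mul_comm, mul_div_assoc, div_self h, mul_one]
    calc ∑ v : Fin (M+1) → A, ∑ a : A,
          cylP μ (Fin.init (Fin.cons a v : Fin (M+2) → A))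
              * cylP μ (Fin.tail (Fin.cons a v : Fin (M+2) → A))
            / cylP μ (Fin.init (Fin.tail (Fin.cons a v : Fin (M+2) → A)))
        ≤ ∑ v : Fin (M+1) → A, cylP μ v := Finset.sum_le_sum fun v _ => hv v
      _ = 1 := sum_cylP μ _
  have hsplitL : ∑ w : Fin (M+2) → A,
      (cylP μ w * Real.log (cylP μ (Fin.init w)) + cylP μ w * Real.log (cylP μ (Fin.tail w))
        - cylP μ w * Real.log (cylP μ (Fin.init (Fin.tail w))) - cylP μ w * Real.log (cylP μ w))
      = (∑ w : Fin (M+2) → A, cylP μ w * Real.log (cylP μ (Fin.init w)))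
        + (∑ w : Fin (M+2) → A, cylP μ w * Real.log (cylP μ (Fin.tail w)))
        - (∑ w : Fin (M+2) → A, cylP μ w * Real.log (cylP μ (Fin.init (Fin.tail w))))
        - (∑ w : Fin (M+2) → A, cylP μ w * Real.log (cylP μ w)) := by
    rw [Finset.sum_sub_distrib, Finset.sum_sub_distrib, Finset.sum_add_distrib]
  have hsplitR : ∑ w : Fin (M+2) → A,
      (cylP μ (Fin.init w) * cylP μ (Fin.tail w) / cylP μ (Fin.init (Fin.tail w)) - cylP μ w)
      = (∑ w : Fin (M+2) → A,
          cylP μ (Fin.init w) * cylP μ (Fin.tail w) / cylP μ (Fin.init (Fin.tail w))) - 1 := by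
    rw [Finset.sum_sub_distrib, sum_cylP μ]
  rw [hsplitL, hsplitR, e1, e2, e3] at hsum
  have h2 : natH μ (M+2) = -∑ w : Fin (M+2) → A, cylP μ w * Real.log (cylP μ w) := rfl
  have h1 : natH μ (M+1) = -∑ u : Fin (M+1) → A, cylP μ u * Real.log (cylP μ u) := rfl
  have h0 : natH μ M = -∑ u : Fin M → A, cylP μ u * Real.log (cylP μ u) := rfl
  linarith

lemma natH_one_le (μ : Measure (ℕ → A)) [IsProbabilityMeasure μ] (hA : 1 ≤ Fintype.card A) :
    natH μ 1 ≤ Real.log (Fintype.card A) := by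
  set n : ℝ := (Fintype.card A : ℝ) with hn
  have hnpos : (0:ℝ) < n := by rw [hn]; exact_mod_cast Nat.lt_of_lt_of_le Nat.zero_lt_one hA
  have key : ∀ w : Fin 1 → A,
      cylP μ w * Real.log (1/n) - cylP μ w * Real.log (cylP μ w) ≤ 1/n - cylP μ w :=
    fun w => gibbs_term (cylP_nonneg μ w) (by positivity) (fun _ => by positivity)
  have hsum := Finset.sum_le_sum (fun w (_ : w ∈ (Finset.univ : Finset (Fin 1 → A))) => key w)
  have hcard : (Fintype.card (Fin 1 → A) : ℝ) = n := by
    rw [hn]; norm_cast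
    simp [Fintype.card_fun]
  rw [Finset.sum_sub_distrib, Finset.sum_sub_distrib, ← Finset.sum_mul, sum_cylP μ,
    Finset.sum_const, Finset.card_univ, nsmul_eq_mul, hcard] at hsum
  have : n * (1/n) = 1 := by field_simp
  rw [this, one_mul, Real.log_div one_ne_zero hnpos.ne', Real.log_one] at hsum
  have hH : natH μ 1 = -∑ w : Fin 1 → A, cylP μ w * Real.log (cylP μ w) := rfl
  linarith


noncomputable def dH (μ : Measure (ℕ → A)) (n : ℕ) : ℝ := blockH μ (n+1) - blockH μ n

lemma blockH_zero : blockH μ 0 = 0 := by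
  rw [blockH_eq_natH, natH_zero, zero_div]

lemma blockH_concave (hstat : MeasurePreserving (shift (A := A)) μ μ) (M : ℕ) :
    blockH μ (M+2) + blockH μ M ≤ 2 * blockH μ (M+1) := by
  have h := natH_ssa μ hstat M
  have hlog2 : (0:ℝ) < Real.log 2 := Real.log_pos one_lt_two
  rw [blockH_eq_natH, blockH_eq_natH, blockH_eq_natH, ← add_div, ← mul_div_assoc]
  exact div_le_div_of_nonneg_right h hlog2.le |>.trans_eq rfl

lemma blockH_one_le (hA : 1 ≤ Fintype.card A) :
    blockH μ 1 ≤ Real.logb 2 (Fintype.card A) := by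
  have hlog2 : (0:ℝ) < Real.log 2 := Real.log_pos one_lt_two
  rw [blockH_eq_natH, Real.logb]
  exact div_le_div_of_nonneg_right (natH_one_le μ hA) hlog2.le |>.trans_eq rfl

lemma dH_antitone (hstat : MeasurePreserving (shift (A := A)) μ μ) : Antitone (dH μ) := by
  refine antitone_nat_of_succ_le fun n => ?_
  have := blockH_concave μ hstat n
  simp only [dH]
  linarith

lemma sum_dH (N : ℕ) : ∑ k ∈ Finset.range N, dH μ k = blockH μ N := by
  simp only [dH]
  rw [Finset.sum_range_sub (fun k => blockH μ k), blockH_zero, sub_zero]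

lemma dH_le_avg (hstat : MeasurePreserving (shift (A := A)) μ μ) (n : ℕ) :
    dH μ n ≤ blockH μ (n+1) / ((n+1 : ℕ) : ℝ) := by
  have h1 : (Finset.range (n+1)).card • dH μ n ≤ ∑ k ∈ Finset.range (n+1), dH μ k :=
    Finset.card_nsmul_le_sum _ _ _ fun k hk =>
      dH_antitone μ hstat (Nat.le_of_lt_succ (Finset.mem_range.1 hk))
  rw [Finset.card_range, sum_dH μ, nsmul_eq_mul] at h1
  have hpos : (0:ℝ) < ((n+1 : ℕ) : ℝ) := by positivity
  rw [le_div_iff₀ hpos]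
  linarith

lemma avg_le_dH (hstat : MeasurePreserving (shift (A := A)) μ μ) (n : ℕ) (hn : 1 ≤ n) :
    2 * (blockH μ (2*n) / ((2*n : ℕ) : ℝ)) - blockH μ n / (n : ℝ) ≤ dH μ n := by
  have h1 : ∑ k ∈ Finset.Ico n (2*n), dH μ k ≤ (Finset.Ico n (2*n)).card • dH μ n :=
    Finset.sum_le_card_nsmul _ _ _ fun k hk =>
      dH_antitone μ hstat (Finset.mem_Ico.1 hk).1
  have h2 : ∑ k ∈ Finset.Ico n (2*n), dH μ k = blockH μ (2*n) - blockH μ n := by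
    rw [Finset.sum_Ico_eq_sub _ (by omega : n ≤ 2*n), sum_dH μ, sum_dH μ]
  rw [h2, Nat.card_Ico, nsmul_eq_mul] at h1
  have hcard : ((2*n - n : ℕ) : ℝ) = (n : ℝ) := by
    congr 1; omega
  rw [hcard] at h1
  have npos : (0:ℝ) < (n : ℝ) := by exact_mod_cast hn
  have hcast : ((2*n : ℕ) : ℝ) = 2 * (n : ℝ) := by push_cast; ring
  have heq : 2 * (blockH μ (2*n) / ((2*n : ℕ) : ℝ)) - blockH μ n / (n : ℝ)
      = (blockH μ (2*n) - blockH μ n) / (n : ℝ) := by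
    rw [hcast]; field_simp
  rw [heq, div_le_iff₀ npos]
  linarith


lemma tendsto_dH (hstat : MeasurePreserving (shift (A := A)) μ μ)
    (hμ : ℝ) (hrate : Tendsto (fun L : ℕ => blockH μ L / L) atTop (nhds hμ)) :
    Tendsto (dH μ) atTop (nhds hμ) := by
  have hup : Tendsto (fun n : ℕ => blockH μ (n+1) / ((n+1 : ℕ) : ℝ)) atTop (nhds hμ) :=
    hrate.comp (tendsto_add_atTop_nat 1)
  have h2n : Tendsto (fun n : ℕ => 2*n) atTop atTop :=
    tendsto_atTop_atTop.2 fun b => ⟨b, fun a ha => by omega⟩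
  have hdouble : Tendsto (fun n : ℕ => blockH μ (2*n) / ((2*n : ℕ) : ℝ)) atTop (nhds hμ) :=
    hrate.comp h2n
  have hlow : Tendsto (fun n : ℕ => 2 * (blockH μ (2*n) / ((2*n : ℕ) : ℝ))
      - blockH μ n / (n : ℝ)) atTop (nhds (2 * hμ - hμ)) :=
    (hdouble.const_mul 2).sub hrate
  have h' : 2 * hμ - hμ = hμ := by ring
  rw [h'] at hlow
  refine tendsto_of_tendsto_of_tendsto_of_le_of_le' hlow hup ?_ ?_
  · filter_upwards [eventually_ge_atTop 1] with n hn
    exact avg_le_dH μ hstat n hn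
  · exact Eventually.of_forall (dH_le_avg μ hstat)

end aux

theorem total_predictability_eq_neg_redundancy
    {A : Type*} [MeasurableSpace A] [MeasurableSingletonClass A] [Fintype A]
    (hA : 2 ≤ Fintype.card A)
    (μ : Measure (ℕ → A)) [IsProbabilityMeasure μ]
    (hstat : MeasurePreserving (shift (A := A)) μ μ)
    (hμ : ℝ) (hrate : Tendsto (fun L : ℕ => blockH μ L / L) atTop (nhds hμ)) :
    Tendsto (fun N : ℕ => ∑ L ∈ Finset.range N, d2H μ (L + 1)) atTop
      (nhds (hμ - Real.logb 2 (Fintype.card A))) := by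
  set c := Real.logb 2 (Fintype.card A) with hc
  have hid : ∀ m : ℕ, ∑ L ∈ Finset.range (m+1), d2H μ (L + 1) = dH μ m - c := by
    intro m
    induction m with
    | zero =>
      rw [Finset.sum_range_one]
      norm_num [d2H, dH, blockH_zero μ, hc]
    | succ m ih =>
      rw [Finset.sum_range_succ, ih]
      have h2 : d2H μ (m + 1 + 1) = blockH μ (m+2) - 2 * blockH μ (m+1) + blockH μ m := by
        simp only [d2H, if_neg (by omega : ¬ (m + 1 + 1 = 1))]
        rw [show m+1+1-1 = m+1 from rfl, show m+1+1-2 = m from rfl]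
      rw [h2]
      simp only [dH]
      ring_nf
  have ha : Tendsto (dH μ) atTop (nhds hμ) := tendsto_dH μ hstat hμ hrate
  have hmain : Tendsto (fun m : ℕ => ∑ L ∈ Finset.range (m+1), d2H μ (L + 1)) atTop
      (nhds (hμ - c)) :=
    (ha.sub_const c).congr fun m => (hid m).symm
  exact (tendsto_add_atTop_iff_nat 1).1 hmain
end

section
/- Suppose the excess entropy E = Σ_{L=1}^∞ [h_μ(L) - h_μ] converges. Then the excess entropy equals the limiting mutual information between the past and future halves of the process: lim_{L→∞} [2H(L) - H(2L)] = E, where by stationarity 2H(L) - H(2L) is the Shannon mutual information I[S₁…S_L ; S_{L+1}…S_{2L}] between the first L symbols and the following L symbols. -/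
open MeasureTheory Real Filter

/-- If the excess entropy `E = Σ_{L=1}^∞ [h_μ(L) - h_μ]` converges, then it
equals the limiting mutual information between past and future halves:
`lim_{L→∞} [2H(L) - H(2L)] = E`. -/
theorem excess_entropy_eq_past_future_mutual_information
    {A : Type*} [MeasurableSpace A] [MeasurableSingletonClass A] [Fintype A]
    (hA : 2 ≤ Fintype.card A)
    (μ : Measure (ℕ → A)) [IsProbabilityMeasure μ]
    (hstat : MeasurePreserving (shift (A := A)) μ μ)
    (hμ : ℝ) (hrate : Tendsto (fun L : ℕ => blockH μ L / L) atTop (nhds hμ))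
    (E : ℝ)
    (hE : Tendsto (fun N : ℕ => ∑ L ∈ Finset.range N, (blockH μ (L + 1) - blockH μ L - hμ))
      atTop (nhds E)) :
    Tendsto (fun L : ℕ => 2 * blockH μ L - blockH μ (2 * L)) atTop (nhds E) := by
  have h0 : blockH μ 0 = 0 := by
    simp [blockH, cylP]
  have key : ∀ N : ℕ, ∑ L ∈ Finset.range N, (blockH μ (L + 1) - blockH μ L - hμ)
      = blockH μ N - N * hμ := by
    intro N
    rw [Finset.sum_sub_distrib, Finset.sum_range_sub (fun L => blockH μ L), h0,
      Finset.sum_const, Finset.card_range, nsmul_eq_mul]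
    ring
  have hf : Tendsto (fun N : ℕ => blockH μ N - N * hμ) atTop (nhds E) := by
    simpa [key] using hE
  have h2L : Tendsto (fun L : ℕ => 2 * L) atTop atTop :=
    tendsto_atTop_atTop.mpr fun b => ⟨b, fun a ha => by omega⟩
  have h2 : Tendsto (fun L : ℕ => blockH μ (2 * L) - (2 * L : ℕ) * hμ) atTop (nhds E) :=
    hf.comp h2L
  have := (hf.const_mul 2).sub h2
  have heq : (fun L : ℕ => 2 * (blockH μ L - L * hμ) - (blockH μ (2 * L) - (2 * L : ℕ) * hμ))
      = fun L : ℕ => 2 * blockH μ L - blockH μ (2 * L) := by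
    funext L; push_cast; ring
  rw [heq] at this
  convert this using 2
  ring
end

section
/- Suppose the excess entropy E = Σ_{L=1}^∞ [h_μ(L) - h_μ] converges and the series Σ_{L=1}^∞ L·[h_μ(L) - h_μ] converges. Then the transient information T := Σ_{L=0}^∞ [E + h_μ·L - H(L)] converges and T = Σ_{L=1}^∞ L·[h_μ(L) - h_μ]. -/
open MeasureTheory Real Filter

lemma blockH_zero_s12 {A : Type*} [MeasurableSpace A] [Fintype A]
    (μ : Measure (ℕ → A)) [IsProbabilityMeasure μ] : blockH μ 0 = 0 := by
  have h : ∀ w : Fin 0 → A, cylP μ w = 1 := by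
    intro w
    unfold cylP
    have hs : {x : ℕ → A | ∀ i : Fin 0, x i.1 = w i} = Set.univ := by
      ext x; simp
    rw [hs, measure_univ]; simp
  simp [blockH, h]

/-- Abel summation bound. -/
lemma abel_G (W : ℕ → ℝ) (N : ℕ) (C : ℝ)
    (hC : ∀ j, N ≤ j → |W j - W N| ≤ C) :
    ∀ M, N ≤ M →
      |(∑ k ∈ Finset.Ico N M, (W (k+1) - W k)/((k:ℝ)+1)) - (W M - W N)/((M:ℝ)+1)|
        ≤ C * (1/((N:ℝ)+1) - 1/((M:ℝ)+1)) := by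
  intro M hM
  induction M, hM using Nat.le_induction with
  | base => simp
  | succ M hM ih =>
    have hM1 : ((M:ℝ)+1) ≠ 0 := by positivity
    have hM2 : ((M:ℝ)+1+1) ≠ 0 := by positivity
    rw [Finset.sum_Ico_succ_top hM]
    push_cast
    have key : (∑ k ∈ Finset.Ico N M, (W (k+1) - W k)/((k:ℝ)+1)) + (W (M+1) - W M)/((M:ℝ)+1)
        - (W (M+1) - W N)/((M:ℝ)+1+1)
      = ((∑ k ∈ Finset.Ico N M, (W (k+1) - W k)/((k:ℝ)+1)) - (W M - W N)/((M:ℝ)+1))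
        + (W (M+1) - W N) * (1/((M:ℝ)+1) - 1/((M:ℝ)+1+1)) := by
      field_simp
      ring
    rw [key]
    have h1 : |(W (M+1) - W N) * (1/((M:ℝ)+1) - 1/((M:ℝ)+1+1))|
        ≤ C * (1/((M:ℝ)+1) - 1/((M:ℝ)+1+1)) := by
      rw [abs_mul]
      have hpos : (0:ℝ) ≤ 1/((M:ℝ)+1) - 1/((M:ℝ)+1+1) := by
        have : (1:ℝ)/((M:ℝ)+1+1) ≤ 1/((M:ℝ)+1) := by
          apply one_div_le_one_div_of_le
          · positivity
          · linarith
        linarith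
      rw [abs_of_nonneg hpos]
      exact mul_le_mul_of_nonneg_right (hC (M+1) (by omega)) hpos
    calc _ ≤ _ + _ := abs_add_le _ _
      _ ≤ C * (1/((N:ℝ)+1) - 1/((M:ℝ)+1)) + C * (1/((M:ℝ)+1) - 1/((M:ℝ)+1+1)) :=
          add_le_add ih h1
      _ = C * (1/((N:ℝ)+1) - 1/((M:ℝ)+1+1)) := by ring

lemma abel_bound (W : ℕ → ℝ) (N : ℕ) (C : ℝ)
    (hC : ∀ j, N ≤ j → |W j - W N| ≤ C) (M : ℕ) (hM : N ≤ M) :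
    |∑ k ∈ Finset.Ico N M, (W (k+1) - W k)/((k:ℝ)+1)| ≤ C / ((N:ℝ)+1) := by
  have hC0 : 0 ≤ C := by simpa using hC N le_rfl
  have h := abel_G W N C hC M hM
  have h2 : |(W M - W N)/((M:ℝ)+1)| ≤ C / ((M:ℝ)+1) := by
    rw [abs_div, abs_of_nonneg (by positivity : (0:ℝ) ≤ (M:ℝ)+1)]
    gcongr
    exact hC M hM
  calc |∑ k ∈ Finset.Ico N M, (W (k+1) - W k)/((k:ℝ)+1)|
      ≤ |(∑ k ∈ Finset.Ico N M, (W (k+1) - W k)/((k:ℝ)+1)) - (W M - W N)/((M:ℝ)+1)|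
        + |(W M - W N)/((M:ℝ)+1)| := by
        have := abs_sub_abs_le_abs_sub (∑ k ∈ Finset.Ico N M, (W (k+1) - W k)/((k:ℝ)+1))
          ((W M - W N)/((M:ℝ)+1))
        nlinarith [abs_nonneg ((W M - W N)/((M:ℝ)+1))]
    _ ≤ C * (1/((N:ℝ)+1) - 1/((M:ℝ)+1)) + C / ((M:ℝ)+1) := add_le_add h h2
    _ = C / ((N:ℝ)+1) := by field_simp; ring

lemma tail_mul_tendsto_zero (d : ℕ → ℝ) (E T : ℝ)
    (hE : Tendsto (fun N : ℕ => ∑ L ∈ Finset.range N, d L) atTop (nhds E))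
    (hT : Tendsto (fun N : ℕ => ∑ L ∈ Finset.range N, ((L:ℝ)+1) * d L) atTop (nhds T)) :
    Tendsto (fun N : ℕ => (N:ℝ) * (E - ∑ L ∈ Finset.range N, d L)) atTop (nhds 0) := by
  set S := fun N : ℕ => ∑ L ∈ Finset.range N, d L with hS
  set W := fun N : ℕ => ∑ L ∈ Finset.range N, ((L:ℝ)+1) * d L with hW
  rw [Metric.tendsto_atTop]
  intro ε hε
  obtain ⟨N₀, hN₀⟩ := Metric.tendsto_atTop.mp hT (ε/8) (by linarith)
  refine ⟨N₀, fun N hN => ?_⟩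
  have hC : ∀ j, N ≤ j → |W j - W N| ≤ ε/4 := by
    intro j hj
    have h1 := hN₀ j (le_trans hN hj)
    have h2 := hN₀ N hN
    rw [Real.dist_eq] at h1 h2
    calc |W j - W N| = |(W j - T) - (W N - T)| := by ring_nf
      _ ≤ |W j - T| + |W N - T| := abs_sub _ _
      _ ≤ ε/8 + ε/8 := add_le_add h1.le h2.le
      _ = ε/4 := by ring
  -- W (k+1) - W k = (k+1) * d k
  have hdk : ∀ k : ℕ, (W (k+1) - W k)/((k:ℝ)+1) = d k := by
    intro k
    have : W (k+1) = W k + ((k:ℝ)+1) * d k := Finset.sum_range_succ _ k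
    rw [this]
    field_simp
    ring
  have hIco : ∀ M, N ≤ M → |S M - S N| ≤ (ε/4) / ((N:ℝ)+1) := by
    intro M hM
    have := abel_bound W N (ε/4) hC M hM
    rw [show (∑ k ∈ Finset.Ico N M, (W (k+1) - W k)/((k:ℝ)+1)) = ∑ k ∈ Finset.Ico N M, d k
       from Finset.sum_congr rfl (fun k _ => hdk k)] at this
    rwa [Finset.sum_Ico_eq_sub d hM] at this
  have hlim : |E - S N| ≤ (ε/4) / ((N:ℝ)+1) := by
    have h1 : Tendsto (fun M : ℕ => |S M - S N|) atTop (nhds |E - S N|) :=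
      ((hE.sub tendsto_const_nhds).abs)
    exact le_of_tendsto h1 (eventually_atTop.2 ⟨N, hIco⟩)
  rw [Real.dist_eq, sub_zero, abs_mul, abs_of_nonneg (Nat.cast_nonneg N)]
  calc (N:ℝ) * |E - S N| ≤ (N:ℝ) * ((ε/4)/((N:ℝ)+1)) :=
        mul_le_mul_of_nonneg_left hlim (Nat.cast_nonneg N)
    _ ≤ ε/4 := by
        rw [mul_div_assoc']
        rw [div_le_iff₀ (by positivity)]
        nlinarith [Nat.cast_nonneg (α := ℝ) N]
    _ < ε := by linarith

lemma sum_identity (d : ℕ → ℝ) (E : ℝ) (N : ℕ) :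
    ∑ L ∈ Finset.range N, (E - ∑ k ∈ Finset.range L, d k)
      = (∑ L ∈ Finset.range N, ((L:ℝ)+1)*d L) + (N:ℝ) * (E - ∑ k ∈ Finset.range N, d k) := by
  induction N with
  | zero => simp
  | succ N ih =>
    rw [Finset.sum_range_succ, ih, Finset.sum_range_succ (fun L => ((L:ℝ)+1)*d L),
      Finset.sum_range_succ d]
    push_cast
    ring

/-- If the excess entropy `E = Σ_{L=1}^∞ [h_μ(L) - h_μ]` converges and
the series `Σ_{L=1}^∞ L·[h_μ(L) - h_μ]` converges (to `T`), then the transient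
information `Σ_{L=0}^∞ [E + h_μ·L - H(L)]` converges and equals `T`. -/
theorem transient_information_eq_weighted_redundancy_sum
    {A : Type*} [MeasurableSpace A] [MeasurableSingletonClass A] [Fintype A]
    (hA : 2 ≤ Fintype.card A)
    (μ : Measure (ℕ → A)) [IsProbabilityMeasure μ]
    (hstat : MeasurePreserving (shift (A := A)) μ μ)
    (hμ : ℝ) (hrate : Tendsto (fun L : ℕ => blockH μ L / L) atTop (nhds hμ))
    (E : ℝ)
    (hE : Tendsto (fun N : ℕ => ∑ L ∈ Finset.range N, (blockH μ (L + 1) - blockH μ L - hμ))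
      atTop (nhds E))
    (T : ℝ)
    (hT : Tendsto (fun N : ℕ => ∑ L ∈ Finset.range N,
        ((L : ℝ) + 1) * (blockH μ (L + 1) - blockH μ L - hμ)) atTop (nhds T)) :
    Tendsto (fun N : ℕ => ∑ L ∈ Finset.range N, (E + hμ * L - blockH μ L)) atTop
      (nhds T) := by
  set d := fun L : ℕ => blockH μ (L + 1) - blockH μ L - hμ with hd
  have hH : ∀ L : ℕ, blockH μ L = hμ * L + ∑ k ∈ Finset.range L, d k := by
    intro L
    have ht : ∑ k ∈ Finset.range L, (blockH μ (k+1) - blockH μ k)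
        = blockH μ L - blockH μ 0 := Finset.sum_range_sub _ _
    have h0 : blockH μ 0 = 0 := blockH_zero_s12 μ
    have hsplit : ∑ k ∈ Finset.range L, d k
        = (∑ k ∈ Finset.range L, (blockH μ (k+1) - blockH μ k)) - L * hμ := by
      rw [Finset.sum_sub_distrib, Finset.sum_const, Finset.card_range, nsmul_eq_mul]
    rw [hsplit, ht, h0]
    ring
  have heq : ∀ N : ℕ, ∑ L ∈ Finset.range N, (E + hμ * L - blockH μ L)
      = (∑ L ∈ Finset.range N, ((L:ℝ)+1)*d L)
        + (N:ℝ) * (E - ∑ k ∈ Finset.range N, d k) := by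
    intro N
    rw [← sum_identity d E N]
    apply Finset.sum_congr rfl
    intro L _
    rw [hH L]
    ring
  have h1 : Tendsto (fun N : ℕ => (∑ L ∈ Finset.range N, ((L:ℝ)+1)*d L)
      + (N:ℝ) * (E - ∑ k ∈ Finset.range N, d k)) atTop (nhds (T + 0)) :=
    hT.add (tail_mul_tendsto_zero d E T hE hT)
  rw [add_zero] at h1
  exact h1.congr (fun N => (heq N).symm)
end
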